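/- Let the machine M be TA-compliant with the Hinke–Schaefer architecture HS and let G = {L_user, L_DBMS, L_F}. If π(p) depends on {H_user, H_DBMS, H_F} actions at α, then M,π,α ⊨ ¬K_G p. -/

import Mathlib

structure Machine (S A D O : Type) where
  s0 : S
  step : S → A → S
  dom : A → D
  obs : D → S → O

namespace Machine

def run {S A D O : Type} (M : Machine S A D O) (α : List A) : S :=
  α.foldl M.step M.s0

end Machine
/-- Elements of a view: actions or (group) observations. -/
inductive VE (A O' : Type) where
  | act : A → VE A O'
  | obs : O' → VE A O'

open Classical in
/-- Absorptive concatenation: `σ ∘ x` is `σ` if `x` equals the last element of `σ`,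
and `σ ++ [x]` otherwise. -/
noncomputable def absorb {X : Type} (σ : List X) (x : X) : List X :=
  if σ.getLast? = some x then σ else σ ++ [x]

open Classical in
/-- View of a group `G`, computed on the reversed action sequence. -/
noncomputable def viewR {S A D O : Type} (M : Machine S A D O) (G : Set D) :
    List A → List (VE A (G → O))
  | [] => [VE.obs (fun u : G => M.obs u.1 M.s0)]
  | a :: ρ =>
    let o : VE A (G → O) := VE.obs (fun u : G => M.obs u.1 (M.run ((a :: ρ).reverse)))
    if M.dom a ∈ G then viewR M G ρ ++ [VE.act a, o] else absorb (viewR M G ρ) o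

/-- The view of group `G` of the action sequence `α`. -/
noncomputable def view {S A D O : Type} (M : Machine S A D O) (G : Set D) (α : List A) :
    List (VE A (G → O)) :=
  viewR M G α.reverse
/-- Values of the `ta` function: nested tuples of actions. -/
inductive TA (A : Type) where
  | eps : TA A
  | node : TA A → TA A → A → TA A

open Classical in
/-- `ta`, computed on the reversed action sequence. -/
noncomputable def taR {A D : Type} (P : D → D → Prop) (dm : A → D) :
    List A → D → TA A
  | [], _ => TA.eps
  | a :: ρ, u =>
    if P (dm a) u then TA.node (taR P dm ρ u) (taR P dm ρ (dm a)) a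
    else taR P dm ρ u

/-- `ta P dm α u` : maximal information domain `u` is permitted to have after `α`. -/
noncomputable def ta {A D : Type} (P : D → D → Prop) (dm : A → D) (α : List A) (u : D) :
    TA A :=
  taR P dm α.reverse u

/-- TA-compliance of a machine with the information-flow policy `P`. -/
def TACompliant {S A D O : Type} (M : Machine S A D O) (P : D → D → Prop) : Prop :=
  ∀ (u : D) (α α' : List A), ta P M.dom α u = ta P M.dom α' u →
    M.obs u (M.run α) = M.obs u (M.run α')
/-- Formulas of the epistemic logic (without distributed knowledge). -/
inductive Formula (PC D : Type) where
  | tru : Formula PC D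
  | atom : PC → Formula PC D
  | neg : Formula PC D → Formula PC D
  | conj : Formula PC D → Formula PC D → Formula PC D
  | know : Set D → Formula PC D → Formula PC D

/-- Satisfaction relation `M,π,α ⊨ φ`. -/
def sat {S A D O PC : Type} (M : Machine S A D O) (π : PC → Set (List A)) :
    List A → Formula PC D → Prop
  | _, .tru => True
  | α, .atom p => α ∈ π p
  | α, .neg φ => ¬ sat M π α φ
  | α, .conj φ ψ => sat M π α φ ∧ sat M π α ψ
  | α, .know G φ => ∀ α', view M G α' = view M G α → sat M π α' φ
open Classical in
/-- `restr dm G α` : subsequence of `α` of actions whose domain lies in `G`. -/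
noncomputable def restr {A D : Type} (dm : A → D) (G : Set D) (α : List A) : List A :=
  α.filter (fun a => decide (dm a ∈ G))

/-- Proposition `X` depends on `G` actions at `α`. -/
def DependsOnActs {A D : Type} (dm : A → D) (G : Set D) (X : Set (List A)) (α : List A) :
    Prop :=
  ∃ β : List A, restr dm Gᶜ α = restr dm Gᶜ β ∧ (α ∈ X ↔ β ∉ X)

/-- The six domains of the Hinke–Schaefer architecture `HS`. -/
inductive HSDom where
  | Huser : HSDom
  | Hdbms : HSDom
  | HF : HSDom
  | Luser : HSDom
  | Ldbms : HSDom
  | LF : HSDom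
deriving DecidableEq

/-- The non-reflexive edges of the Hinke–Schaefer architecture. -/
def HSbase : HSDom → HSDom → Prop := fun u v =>
  (u = HSDom.Huser ∧ v = HSDom.Hdbms) ∨ (u = HSDom.Hdbms ∧ v = HSDom.Huser) ∨
  (u = HSDom.Hdbms ∧ v = HSDom.HF) ∨ (u = HSDom.HF ∧ v = HSDom.Hdbms) ∨
  (u = HSDom.Luser ∧ v = HSDom.Ldbms) ∨ (u = HSDom.Ldbms ∧ v = HSDom.Luser) ∨
  (u = HSDom.Ldbms ∧ v = HSDom.LF) ∨ (u = HSDom.LF ∧ v = HSDom.Ldbms) ∨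
  (u = HSDom.LF ∧ v = HSDom.Hdbms)

/-- The information-flow policy of `HS`: the reflexive closure of `HSbase`. -/
def HSrel : HSDom → HSDom → Prop := fun u v => u = v ∨ HSbase u v

/-- The low domains. -/
def Lset : Set HSDom := {HSDom.Luser, HSDom.Ldbms, HSDom.LF}

open Classical

lemma no_flow_HL {d u : HSDom} (hu : u ∈ Lset) (hd : d ∉ Lset) : ¬ HSrel d u := by
  cases d <;> cases u <;> simp_all [Lset, HSrel, HSbase]

lemma taR_filter {A : Type} (dm : A → HSDom) :
    ∀ (ρ : List A) (u : HSDom), u ∈ Lset →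
      taR HSrel dm ρ u = taR HSrel dm (ρ.filter (fun a => decide (dm a ∈ Lset))) u := by
  intro ρ
  induction ρ with
  | nil => intro u _; rfl
  | cons a ρ ih =>
    intro u hu
    by_cases hd : dm a ∈ Lset
    · by_cases hrel : HSrel (dm a) u
      · simp only [taR, List.filter_cons, decide_eq_true hd, if_pos hrel, if_true]
        rw [ih u hu, ih (dm a) hd]
      · simp only [taR, List.filter_cons, decide_eq_true hd, if_neg hrel, if_true]
        exact ih u hu
    · have hrel := no_flow_HL hu hd
      simp only [taR, List.filter_cons, decide_eq_false hd, if_neg hrel, if_false,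
        Bool.false_eq_true]
      exact ih u hu

lemma obs_filter {S A O : Type} (M : Machine S A HSDom O) (hTA : TACompliant M HSrel)
    (ρ : List A) {u : HSDom} (hu : u ∈ Lset) :
    M.obs u (M.run ρ.reverse) =
      M.obs u (M.run (ρ.filter (fun a => decide (M.dom a ∈ Lset))).reverse) := by
  apply hTA
  simp only [ta, List.reverse_reverse]
  exact taR_filter M.dom ρ u hu

lemma viewR_getLast {S A O : Type} (M : Machine S A HSDom O) (G : Set HSDom) :
    ∀ ρ : List A, (viewR M G ρ).getLast? =
      some (VE.obs (fun u : G => M.obs u.1 (M.run ρ.reverse))) := by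
  intro ρ
  cases ρ with
  | nil => rfl
  | cons a ρ =>
    by_cases h : M.dom a ∈ G
    · simp [viewR, h]
    · simp only [viewR, h, if_false, absorb]
      split
      · next heq => rw [heq]
      · simp

lemma obs_step_H {S A O : Type} (M : Machine S A HSDom O) (hTA : TACompliant M HSrel)
    (ρ : List A) {a : A} (ha : M.dom a ∉ Lset) {u : HSDom} (hu : u ∈ Lset) :
    M.obs u (M.run (a :: ρ).reverse) = M.obs u (M.run ρ.reverse) := by
  apply hTA
  simp only [ta, List.reverse_reverse]
  show taR HSrel M.dom (a :: ρ) u = taR HSrel M.dom ρ u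
  simp [taR, no_flow_HL hu ha]

lemma viewR_filter {S A O : Type} (M : Machine S A HSDom O) (hTA : TACompliant M HSrel) :
    ∀ ρ : List A, viewR M Lset ρ =
      viewR M Lset (ρ.filter (fun a => decide (M.dom a ∈ Lset))) := by
  intro ρ
  induction ρ with
  | nil => rfl
  | cons a ρ ih =>
    by_cases hd : M.dom a ∈ Lset
    · simp only [viewR, List.filter_cons, decide_eq_true hd, if_pos hd, if_true, ih]
      have ho : (fun u : Lset => M.obs u.1 (M.run (a :: ρ).reverse)) =
          fun u : Lset =>
            M.obs u.1 (M.run (a :: ρ.filter (fun a => decide (M.dom a ∈ Lset))).reverse) := by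
        funext u
        have h := obs_filter M hTA (a :: ρ) (u := u.1) u.2
        simpa [List.filter_cons, decide_eq_true hd] using h
      rw [ho]
    · simp only [viewR, List.filter_cons, decide_eq_false hd, if_neg hd, if_false,
        Bool.false_eq_true]
      have hobs : (fun u : Lset => M.obs u.1 (M.run ((a :: ρ).reverse)))
          = fun u : Lset => M.obs u.1 (M.run ρ.reverse) := by
        funext u; exact obs_step_H M hTA ρ hd u.2
      rw [hobs, absorb, if_pos (viewR_getLast M Lset ρ)]
      exact ih

/-- if `M` is TA-compliant with `HS` and `π(p)` depends on
`{H_user, H_DBMS, H_F}` actions at `α`, then `M,π,α ⊨ ¬K_G p` for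
`G = {L_user, L_DBMS, L_F}`. -/
theorem statement5 {S A O PC : Type} (M : Machine S A HSDom O)
    (hTA : TACompliant M HSrel) (π : PC → Set (List A)) (p : PC) (α : List A)
    (hdep : DependsOnActs M.dom {HSDom.Huser, HSDom.Hdbms, HSDom.HF} (π p) α) :
    sat M π α (Formula.neg
      (Formula.know {HSDom.Luser, HSDom.Ldbms, HSDom.LF} (Formula.atom p))) := by
  rcases hdep with ⟨β, hres, hiff⟩
  have hcompl : ∀ d : HSDom, d ∈ ({HSDom.Huser, HSDom.Hdbms, HSDom.HF} : Set HSDom)ᶜ ↔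
      d ∈ Lset := by intro d; cases d <;> simp [Lset]
  have hfil : ∀ γ : List A, restr M.dom ({HSDom.Huser, HSDom.Hdbms, HSDom.HF} : Set HSDom)ᶜ γ
      = γ.filter (fun a => decide (M.dom a ∈ Lset)) := by
    intro γ
    apply List.filter_congr
    intro a _
    exact decide_eq_decide.mpr (hcompl (M.dom a))
  have hL : α.filter (fun a => decide (M.dom a ∈ Lset))
      = β.filter (fun a => decide (M.dom a ∈ Lset)) := by
    rw [← hfil, ← hfil, hres]
  have hview : view M {HSDom.Luser, HSDom.Ldbms, HSDom.LF} β =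
      view M {HSDom.Luser, HSDom.Ldbms, HSDom.LF} α := by
    show viewR M Lset β.reverse = viewR M Lset α.reverse
    rw [viewR_filter M hTA β.reverse, viewR_filter M hTA α.reverse,
      List.filter_reverse, List.filter_reverse, hL]
  intro hK
  have hβ := hK β hview
  have hα := hK α rfl
  simp only [sat] at hβ hα
  tauto
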